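/- arXiv:2501.10887 — 2 statements merged into one kernel-verified Lean document; each statement's English description precedes it below -/
import Mathlib

section
/- A linear map d : V → V is a derivation of the Leibniz algebra L₁ if and only if there exist complex numbers a, b, c, f such that d(e₁) = a·e₁ + b·e₂ + c·e₃ + f·e₄, d(e₂) = 2a·e₂ + b·e₃ + c·e₄, d(e₃) = 3a·e₃ + b·e₄, and d(e₄) = 4a·e₄. Consequently, the space of derivations of L₁ is a 4-dimensional linear subspace of End(V). -/
/-- `V = ℂ⁴`. -/
abbrev V : Type := Fin 4 → ℂ

/-- standard basis: `e 0 = e₁`, ..., `e 3 = e₄`. -/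
def e (i : Fin 4) : V := Pi.single i 1

/-- Bracket of the Leibniz algebra `L₁`:
`⟦e₁,e₁⟧ = e₂`, `⟦e₂,e₁⟧ = e₃`, `⟦e₃,e₁⟧ = e₄`, all other basis products zero. -/
def br (x y : V) : V :=
  (x 0 * y 0) • e 1 + (x 1 * y 0) • e 2 + (x 2 * y 0) • e 3

/-- A derivation of `L₁`. -/
def IsDer (d : V →ₗ[ℂ] V) : Prop :=
  ∀ x y : V, d (br x y) = br (d x) y + br x (d y)

lemma e_apply (i j : Fin 4) : e i j = if j = i then 1 else 0 := by
  simp [e, Pi.single_apply]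

lemma br_apply (x y : V) (j : Fin 4) :
    br x y j = ![0, x 0 * y 0, x 1 * y 0, x 2 * y 0] j := by
  fin_cases j <;> simp [br, e_apply]

lemma main_iff (d : V →ₗ[ℂ] V) : IsDer d ↔ ∃ a b c f : ℂ,
      d (e 0) = a • e 0 + b • e 1 + c • e 2 + f • e 3 ∧
      d (e 1) = (2 * a) • e 1 + b • e 2 + c • e 3 ∧
      d (e 2) = (3 * a) • e 2 + b • e 3 ∧
      d (e 3) = (4 * a) • e 3 := by
  constructor
  · intro hd
    set a := d (e 0) 0 with ha
    set b := d (e 0) 1 with hb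
    set c := d (e 0) 2 with hc
    set f := d (e 0) 3 with hf
    have h00 : br (e 0) (e 0) = e 1 := by funext j; rw [br_apply]; fin_cases j <;> simp [e_apply]
    have h10 : br (e 1) (e 0) = e 2 := by funext j; rw [br_apply]; fin_cases j <;> simp [e_apply]
    have h20 : br (e 2) (e 0) = e 3 := by funext j; rw [br_apply]; fin_cases j <;> simp [e_apply]
    have hd0 : d (e 0) = a • e 0 + b • e 1 + c • e 2 + f • e 3 := by
      funext j; fin_cases j <;> simp [e_apply, ha, hb, hc, hf]
    have hd1 : d (e 1) = (2 * a) • e 1 + b • e 2 + c • e 3 := by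
      have k := hd (e 0) (e 0)
      rw [h00] at k
      rw [k]
      funext j; rw [Pi.add_apply, br_apply, br_apply]
      fin_cases j <;> simp [e_apply, ha, hb, hc] <;> ring
    have hd2 : d (e 2) = (3 * a) • e 2 + b • e 3 := by
      have k := hd (e 1) (e 0)
      rw [h10] at k
      rw [k]
      funext j; rw [Pi.add_apply, br_apply, br_apply]
      fin_cases j <;> simp [e_apply, hd1, ha, hb] <;> ring
    have hd3 : d (e 3) = (4 * a) • e 3 := by
      have k := hd (e 2) (e 0)
      rw [h20] at k
      rw [k]
      funext j; rw [Pi.add_apply, br_apply, br_apply]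
      fin_cases j <;> simp [e_apply, hd2, ha] <;> ring
    exact ⟨a, b, c, f, hd0, hd1, hd2, hd3⟩
  · rintro ⟨a, b, c, f, h0, h1, h2, h3⟩
    have hv : ∀ v : V, d v = v 0 • d (e 0) + v 1 • d (e 1) + v 2 • d (e 2) + v 3 • d (e 3) := by
      intro v
      have hveq : v = v 0 • e 0 + v 1 • e 1 + v 2 • e 2 + v 3 • e 3 := by
        funext j; fin_cases j <;> simp [e_apply]
      conv_lhs => rw [hveq]
      simp
    have comp : ∀ (v : V) (j : Fin 4), d v j =
        ![a * v 0, b * v 0 + 2*a*v 1, c*v 0 + b*v 1 + 3*a*v 2,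
          f*v 0 + c*v 1 + b*v 2 + 4*a*v 3] j := by
      intro v j
      rw [hv v]
      fin_cases j <;> simp [h0, h1, h2, h3, e_apply] <;> ring
    intro x y
    funext j
    rw [comp, Pi.add_apply, br_apply, br_apply, br_apply (d x)]
    fin_cases j <;> simp [comp, br_apply] <;> ring

/-- The generic derivation with parameters `a b c f`. -/
def Dmap (a b c f : ℂ) : V →ₗ[ℂ] V where
  toFun v := ![a * v 0, b * v 0 + 2*a*v 1, c*v 0 + b*v 1 + 3*a*v 2,
               f*v 0 + c*v 1 + b*v 2 + 4*a*v 3]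
  map_add' u v := by funext j; fin_cases j <;> simp [Pi.add_apply] <;> ring
  map_smul' r v := by funext j; fin_cases j <;> simp [Pi.smul_apply, smul_eq_mul] <;> ring

lemma Dmap_apply (a b c f : ℂ) (v : V) :
    Dmap a b c f v = ![a * v 0, b * v 0 + 2*a*v 1, c*v 0 + b*v 1 + 3*a*v 2,
               f*v 0 + c*v 1 + b*v 2 + 4*a*v 3] := rfl

/-- The parametrization of derivations as a linear map `ℂ⁴ → End V`. -/
def Phi : (Fin 4 → ℂ) →ₗ[ℂ] (V →ₗ[ℂ] V) where
  toFun w := Dmap (w 0) (w 1) (w 2) (w 3)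
  map_add' u v := by
    apply LinearMap.ext; intro x; funext j
    fin_cases j <;> simp [Dmap_apply] <;> ring
  map_smul' r v := by
    apply LinearMap.ext; intro x; funext j
    fin_cases j <;> simp [Dmap_apply, smul_eq_mul] <;> ring

lemma Dmap_e0 (a b c f : ℂ) : Dmap a b c f (e 0) = a • e 0 + b • e 1 + c • e 2 + f • e 3 := by
  rw [Dmap_apply]; funext j; fin_cases j <;> simp [e_apply]
lemma Dmap_e1 (a b c f : ℂ) : Dmap a b c f (e 1) = (2 * a) • e 1 + b • e 2 + c • e 3 := by
  rw [Dmap_apply]; funext j; fin_cases j <;> simp [e_apply]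
lemma Dmap_e2 (a b c f : ℂ) : Dmap a b c f (e 2) = (3 * a) • e 2 + b • e 3 := by
  rw [Dmap_apply]; funext j; fin_cases j <;> simp [e_apply]
lemma Dmap_e3 (a b c f : ℂ) : Dmap a b c f (e 3) = (4 * a) • e 3 := by
  rw [Dmap_apply]; funext j; fin_cases j <;> simp [e_apply]

lemma Phi_inj : Function.Injective Phi := by
  intro w1 w2 h
  have h0 := congrFun (LinearMap.congr_fun h (e 0))
  funext j
  fin_cases j
  · have := h0 0; simpa [Phi, Dmap_apply, e_apply] using this
  · have := h0 1; simp [Phi, Dmap_apply, e_apply] at this; exact this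
  · have := h0 2; simp [Phi, Dmap_apply, e_apply] at this; exact this
  · have := h0 3; simp [Phi, Dmap_apply, e_apply] at this; exact this

lemma range_eq :
    ((LinearMap.range Phi : Submodule ℂ (V →ₗ[ℂ] V)) : Set (V →ₗ[ℂ] V)) = {d | IsDer d} := by
  ext d
  simp only [SetLike.mem_coe, LinearMap.mem_range, Set.mem_setOf_eq, main_iff d]
  constructor
  · rintro ⟨w, rfl⟩
    exact ⟨w 0, w 1, w 2, w 3, Dmap_e0 _ _ _ _, Dmap_e1 _ _ _ _, Dmap_e2 _ _ _ _, Dmap_e3 _ _ _ _⟩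
  · rintro ⟨a, b, c, f, h0, h1, h2, h3⟩
    refine ⟨![a, b, c, f], ?_⟩
    apply (Pi.basisFun ℂ (Fin 4)).ext
    intro i
    have hb : ∀ i : Fin 4, (Pi.basisFun ℂ (Fin 4)) i = e i := by
      intro i; simp [e, Pi.basisFun_apply]
    rw [hb]
    fin_cases i
    · show (Dmap a b c f) (e 0) = d (e 0)
      rw [Dmap_e0, h0]
    · show (Dmap a b c f) (e 1) = d (e 1)
      rw [Dmap_e1, h1]
    · show (Dmap a b c f) (e 2) = d (e 2)
      rw [Dmap_e2, h2]
    · show (Dmap a b c f) (e 3) = d (e 3)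
      rw [Dmap_e3, h3]

lemma rank4 : Module.finrank ℂ (LinearMap.range Phi) = 4 := by
  rw [LinearMap.finrank_range_of_inj Phi_inj]
  simp [Module.finrank_fintype_fun_eq_card]

theorem derivations_of_L1 :
    (∀ d : V →ₗ[ℂ] V, IsDer d ↔ ∃ a b c f : ℂ,
      d (e 0) = a • e 0 + b • e 1 + c • e 2 + f • e 3 ∧
      d (e 1) = (2 * a) • e 1 + b • e 2 + c • e 3 ∧
      d (e 2) = (3 * a) • e 2 + b • e 3 ∧
      d (e 3) = (4 * a) • e 3) ∧
    ∃ S : Submodule ℂ (V →ₗ[ℂ] V),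
      (S : Set (V →ₗ[ℂ] V)) = {d | IsDer d} ∧ Module.finrank ℂ S = 4 := by
  exact ⟨main_iff, LinearMap.range Phi, range_eq, rank4⟩
end

section
/- A linear map D : V → V is an antiderivation of the Leibniz algebra L₁ if and only if D(e₁) lies in the span of e₂, e₃, e₄ and D(e₂) = D(e₃) = D(e₄) = 0. Consequently, the space of antiderivations of L₁ is a 3-dimensional linear subspace of End(V). -/
/-- An antiderivation. -/
def IsAntiDer (D : V →ₗ[ℂ] V) : Prop :=
  ∀ x y : V, D (br x y) = br x (D y) - br y (D x)

lemma V_decomp (x : V) : x = x 0 • e 0 + x 1 • e 1 + x 2 • e 2 + x 3 • e 3 := by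
  funext j; fin_cases j <;> simp [e_apply]

lemma br_right_zero (x v : V) (hv : v 0 = 0) : br x v = 0 := by
  simp [br, hv]

lemma br_e0 (v : V) : br (e 0) v = v 0 • e 1 := by
  simp [br, e_apply]

lemma br_e1 (v : V) : br (e 1) v = v 0 • e 2 := by
  simp [br, e_apply]

lemma br_e2 (v : V) : br (e 2) v = v 0 • e 3 := by
  simp [br, e_apply]

lemma antiDer_iff' (D : V →ₗ[ℂ] V) :
    IsAntiDer D ↔ (D (e 0)) 0 = 0 ∧ D (e 1) = 0 ∧ D (e 2) = 0 ∧ D (e 3) = 0 := by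
  constructor
  · intro h
    have h01 := h (e 0) (e 1)
    rw [br_right_zero (e 0) (e 1) (by simp [e_apply]), map_zero, br_e0, br_e1] at h01
    have hA : (D (e 0)) 0 = 0 := by
      have := congrFun h01 2
      simpa [e_apply] using this
    have h00 := h (e 0) (e 0)
    rw [br_e0, br_e0, sub_self] at h00
    have h1 : D (e 1) = 0 := by
      simpa [e_apply] using h00
    have h10 := h (e 1) (e 0)
    rw [br_e1, br_e1, br_e0] at h10
    simp [e_apply, h1, hA] at h10
    have h2 : D (e 2) = 0 := h10
    have h20 := h (e 2) (e 0)
    rw [br_e2, br_e2, br_e0] at h20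
    simp [e_apply, h2, hA] at h20
    have h3 : D (e 3) = 0 := h20
    exact ⟨hA, h1, h2, h3⟩
  · rintro ⟨h0, h1, h2, h3⟩ x y
    have hx : ∀ z : V, D z = z 0 • D (e 0) := by
      intro z
      conv_lhs => rw [V_decomp z]
      simp [h1, h2, h3]
    have hbr : D (br x y) = 0 := by
      rw [br]
      simp [h1, h2, h3]
    rw [hbr, br_right_zero x (D y) (by rw [hx y]; simp [h0]),
        br_right_zero y (D x) (by rw [hx x]; simp [h0]), sub_zero]

lemma mem_span_iff (v : V) :
    v ∈ Submodule.span ℂ {e 1, e 2, e 3} ↔ v 0 = 0 := by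
  constructor
  · intro hv
    induction hv using Submodule.span_induction with
    | mem w hw =>
      rcases hw with h | h | h <;> subst h <;> simp [e_apply]
    | zero => simp
    | add a b _ _ ha hb => simp [ha, hb]
    | smul c a _ ha => simp [ha]
  · intro hv
    have := V_decomp v
    rw [hv, zero_smul, zero_add] at this
    rw [this]
    refine add_mem (add_mem ?_ ?_) ?_ <;>
      exact Submodule.smul_mem _ _ (Submodule.subset_span (by simp))

noncomputable def f (k : Fin 3) : V →ₗ[ℂ] V :=
  (LinearMap.proj 0 : V →ₗ[ℂ] ℂ).smulRight (e k.succ)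

lemma f_apply (k : Fin 3) (x : V) : f k x = x 0 • e k.succ := rfl

lemma f_antider (k : Fin 3) : IsAntiDer (f k) := by
  rw [antiDer_iff']
  refine ⟨?_, ?_, ?_, ?_⟩ <;> fin_cases k <;>
    simp [f_apply, e_apply] <;> decide

lemma linIndep_f : LinearIndependent ℂ f := by
  rw [Fintype.linearIndependent_iff]
  intro g hg i
  have h0 := congrFun (LinearMap.congr_fun hg (e 0)) (i.succ)
  rw [Fin.sum_univ_three] at h0
  fin_cases i <;>
    simpa [f_apply, e_apply, Fin.succ] using h0

theorem antiderivations_of_L1 :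
    (∀ D : V →ₗ[ℂ] V, IsAntiDer D ↔
      D (e 0) ∈ Submodule.span ℂ {e 1, e 2, e 3} ∧
      D (e 1) = 0 ∧ D (e 2) = 0 ∧ D (e 3) = 0) ∧
    ∃ S : Submodule ℂ (V →ₗ[ℂ] V),
      (S : Set (V →ₗ[ℂ] V)) = {D | IsAntiDer D} ∧ Module.finrank ℂ S = 3 := by
  constructor
  · intro D
    rw [antiDer_iff', mem_span_iff]
  · refine ⟨Submodule.span ℂ (Set.range f), ?_, ?_⟩
    · ext D
      simp only [SetLike.mem_coe, Set.mem_setOf_eq]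
      constructor
      · intro hD
        induction hD using Submodule.span_induction with
        | mem w hw => obtain ⟨k, rfl⟩ := hw; exact f_antider k
        | zero =>
          intro x y
          simp [br_right_zero]
        | add a b _ _ ha hb =>
          rw [antiDer_iff'] at ha hb ⊢
          simp [ha.1, ha.2.1, ha.2.2.1, ha.2.2.2, hb.1, hb.2.1, hb.2.2.1, hb.2.2.2]
        | smul c a _ ha =>
          rw [antiDer_iff'] at ha ⊢
          simp [ha.1, ha.2.1, ha.2.2.1, ha.2.2.2]
      · intro hD
        rw [antiDer_iff'] at hD
        obtain ⟨h0, h1, h2, h3⟩ := hD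
        have hrep : D = D (e 0) 1 • f 0 + D (e 0) 2 • f 1 + D (e 0) 3 • f 2 := by
          apply LinearMap.ext
          intro x
          have hx : D x = x 0 • D (e 0) := by
            conv_lhs => rw [V_decomp x]
            simp [h1, h2, h3]
          rw [hx]
          conv_lhs => rw [V_decomp (D (e 0))]
          rw [h0]
          simp only [LinearMap.add_apply, LinearMap.smul_apply, f_apply]
          show x 0 • ((0:ℂ) • e 0 + D (e 0) 1 • e 1 + D (e 0) 2 • e 2 + D (e 0) 3 • e 3) = _
          rw [zero_smul, zero_add]
          have : ((0:Fin 3).succ) = (1 : Fin 4) := rfl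
          rw [this]
          have : ((1:Fin 3).succ) = (2 : Fin 4) := rfl
          rw [this]
          have : ((2:Fin 3).succ) = (3 : Fin 4) := rfl
          rw [this]
          rw [smul_add, smul_add]
          rw [smul_comm (x 0), smul_comm (x 0), smul_comm (x 0)]
        rw [hrep]
        refine add_mem (add_mem ?_ ?_) ?_ <;>
          exact Submodule.smul_mem _ _ (Submodule.subset_span (Set.mem_range_self _))
    · rw [finrank_span_eq_card linIndep_f]
      simp
end
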